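/- Let R ⊆ ℕ × {1,...,b} be a finite set of cardinality bm, and let g : ℕ → ℤ be a function such that g(l) ≥ g(m) for all l ≥ m and g(l) ≤ g(m-1) for all l ≤ m-1 (g nondecreasing in the relevant range). Then Σ_{(l,w) ∈ R} g(l) ≥ b·Σ_{l=0}^{m-1} g(l) + N·(g(m) - g(m-1)), where N = #{(l,w) ∈ R : l ≥ m} = #{(l,w) ∈ (ℕ_{<m} × {1,...,b}) \ R}. -/

import Mathlib

/-- Counting/rearrangement lemma: for `R ⊆ ℕ × {1,…,b}` of cardinality `bm` and `g`
nondecreasing across the cut at `m`, the sum over `R` is bounded below. -/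
theorem countingRearrangement (b m : ℕ) (hb : 1 ≤ b) (hm : 1 ≤ m)
    (R : Finset (ℕ × ℕ)) (hR2 : ∀ x ∈ R, x.2 ∈ Finset.Icc 1 b)
    (hcard : R.card = b * m) (g : ℕ → ℤ)
    (hg1 : ∀ l, m ≤ l → g m ≤ g l) (hg2 : ∀ l, l ≤ m - 1 → g l ≤ g (m - 1)) :
    (R.filter (fun x => m ≤ x.1)).card
        = ((Finset.range m ×ˢ Finset.Icc 1 b) \ R).card ∧
    (b : ℤ) * (∑ l ∈ Finset.range m, g l)
        + ((R.filter (fun x => m ≤ x.1)).card : ℤ) * (g m - g (m - 1))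
      ≤ ∑ x ∈ R, g x.1 := by
  set S := Finset.range m ×ˢ Finset.Icc 1 b with hS
  have hScard : S.card = b * m := by
    simp [hS, Nat.card_Icc, mul_comm]
  have hfilter : R.filter (fun x => m ≤ x.1) = R \ S := by
    ext x
    simp only [Finset.mem_filter, Finset.mem_sdiff, hS, Finset.mem_product,
      Finset.mem_range]
    constructor
    · rintro ⟨hx, hm'⟩
      exact ⟨hx, fun h => absurd h.1 (by omega)⟩
    · rintro ⟨hx, h⟩
      refine ⟨hx, ?_⟩
      by_contra h'
      exact h ⟨by omega, hR2 x hx⟩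
  have h1 : (R \ S).card + (R ∩ S).card = R.card := Finset.card_sdiff_add_card_inter R S
  have h2 : (S \ R).card + (S ∩ R).card = S.card := Finset.card_sdiff_add_card_inter S R
  have h3 : (R ∩ S).card = (S ∩ R).card := by rw [Finset.inter_comm]
  have hN : (R \ S).card = (S \ R).card := by omega
  refine ⟨by rw [hfilter, hN], ?_⟩
  have hsumS : ∑ x ∈ S, g x.1 = (b : ℤ) * ∑ l ∈ Finset.range m, g l := by
    rw [hS, Finset.sum_product_right]
    simp [Finset.sum_const, Nat.card_Icc, Finset.sum_nsmul]
  have hsplitR : ∑ x ∈ R ∩ S, g x.1 + ∑ x ∈ R \ S, g x.1 = ∑ x ∈ R, g x.1 :=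
    Finset.sum_inter_add_sum_sdiff R S _
  have hsplitS : ∑ x ∈ S ∩ R, g x.1 + ∑ x ∈ S \ R, g x.1 = ∑ x ∈ S, g x.1 :=
    Finset.sum_inter_add_sum_sdiff S R _
  have hinter : ∑ x ∈ R ∩ S, g x.1 = ∑ x ∈ S ∩ R, g x.1 := by rw [Finset.inter_comm]
  have hlow : ((R \ S).card : ℤ) * g m ≤ ∑ x ∈ R \ S, g x.1 := by
    rw [← nsmul_eq_mul]
    refine Finset.card_nsmul_le_sum _ _ _ ?_
    intro x hx
    have : x ∈ R.filter (fun x => m ≤ x.1) := by rw [hfilter]; exact hx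
    exact hg1 x.1 (Finset.mem_filter.mp this).2
  have hup : ∑ x ∈ S \ R, g x.1 ≤ ((S \ R).card : ℤ) * g (m - 1) := by
    rw [← nsmul_eq_mul]
    refine Finset.sum_le_card_nsmul _ _ _ ?_
    intro x hx
    have hx1 : x.1 < m := by
      have := (Finset.mem_sdiff.mp hx).1
      rw [hS] at this
      exact Finset.mem_range.mp (Finset.mem_product.mp this).1
    exact hg2 x.1 (by omega)
  rw [hfilter]
  have hNZ : ((R \ S).card : ℤ) = ((S \ R).card : ℤ) := by exact_mod_cast hN
  rw [← hNZ] at hup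
  linarith [hlow, hup, hsplitR, hsplitS, hinter, hsumS]
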